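/- Fix r > 1. Among all p, q > 1 satisfying 1/p′ + 1/q′ = 1/r′ (where s′ = s/(s-1)), the constant C(p,q,r) = c_p c_q / c_r, with c_s = s^{1/s}/(s′)^{1/s′}, is minimized exactly when p = q = 2r/(r+1), and its minimal value is C = 2^{2/r} · r · (r+1)^{-(r+1)/r}. In particular, C(p,q,r) ≥ 2^{2/r} r (r+1)^{-(r+1)/r} for all admissible p, q > 1. -/

import Mathlib

/-- The conjugate exponent `s′ = s/(s-1)`. -/
noncomputable def conjExp (s : ℝ) : ℝ := s / (s - 1)

/-- The constant `c_s = s^(1/s) / (s′)^(1/s′)`. -/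
noncomputable def youngc (s : ℝ) : ℝ := s ^ (1 / s) / conjExp s ^ (1 / conjExp s)

/-- The sharp Young constant `C(p,q,r) = c_p c_q / c_r`. -/
noncomputable def youngC (p q r : ℝ) : ℝ := youngc p * youngc q / youngc r

noncomputable def Fy (x : ℝ) : ℝ := (1 - x) * Real.log (1 - x) - x * Real.log x


lemma hasDerivAt_Fy {x : ℝ} (hx0 : 0 < x) (hx1 : x < 1) :
    HasDerivAt Fy (-Real.log (1 - x) - Real.log x - 2) x := by
  have h1 : HasDerivAt (fun y : ℝ => y * Real.log y) (Real.log x + 1) x :=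
    Real.hasDerivAt_mul_log (ne_of_gt hx0)
  have h2 : HasDerivAt (fun y : ℝ => y * Real.log y) (Real.log (1 - x) + 1) (1 - x) :=
    Real.hasDerivAt_mul_log (by intro h; linarith [h])
  have h3 : HasDerivAt (fun y : ℝ => 1 - y) (-1 : ℝ) x := by
    simpa using (hasDerivAt_id x).const_sub 1
  have h4 : HasDerivAt (fun y : ℝ => (1 - y) * Real.log (1 - y))
      ((Real.log (1 - x) + 1) * (-1)) x := h2.comp x h3
  have h5 := h4.sub h1
  exact h5.congr_deriv (by ring)

section Key
variable {t : ℝ}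

lemma hasDerivAt_H (ht0 : 0 < t) (ht1 : t < 1) {u : ℝ} (hu0 : t < u) (hu1 : u < 1) :
    HasDerivAt (fun y => Fy y + Fy (1 + t - y))
      ((-Real.log (1 - u) - Real.log u - 2) -
        (-Real.log (1 - (1 + t - u)) - Real.log (1 + t - u) - 2)) u := by
  have hv0 : (0:ℝ) < 1 + t - u := by linarith
  have hv1 : 1 + t - u < 1 := by linarith
  have h1 := hasDerivAt_Fy (show (0:ℝ) < u by linarith) hu1
  have h2 := hasDerivAt_Fy hv0 hv1
  have h3 : HasDerivAt (fun y : ℝ => 1 + t - y) (-1 : ℝ) u := by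
    simpa using (hasDerivAt_id u).const_sub (1 + t)
  have h4 : HasDerivAt (fun y : ℝ => Fy (1 + t - y))
      ((-Real.log (1 - (1 + t - u)) - Real.log (1 + t - u) - 2) * (-1)) u := h2.comp u h3
  have h5 := h1.add h4
  exact h5.congr_deriv (by ring)

lemma key (ht0 : 0 < t) (ht1 : t < 1) {u : ℝ} (hu0 : t < u) (hu1 : u < 1) :
    2 * Fy ((1 + t) / 2) ≤ Fy u + Fy (1 + t - u) ∧
    (Fy u + Fy (1 + t - u) = 2 * Fy ((1 + t) / 2) → u = (1 + t) / 2) := by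
  set m : ℝ := (1 + t) / 2 with hm
  have hmt : t < m := by rw [hm]; linarith
  have hm1 : m < 1 := by rw [hm]; linarith
  set H : ℝ → ℝ := fun y => Fy y + Fy (1 + t - y) with hH
  -- deriv positivity for u ∈ (m,1)
  have derivpos : ∀ x ∈ Set.Ioo m 1, 0 < deriv H x := by
    intro x hx
    obtain ⟨hxm, hx1⟩ := hx
    have hxt : t < x := lt_trans hmt hxm
    have hD := hasDerivAt_H ht0 ht1 hxt hx1
    rw [hD.deriv]
    set v : ℝ := 1 + t - x with hv
    have hv0 : 0 < v := by rw [hv]; linarith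
    have hvx : v < x := by rw [hv, hm] at *; linarith
    have hx0 : (0:ℝ) < x := lt_trans hv0 hvx
    have hv1 : v < 1 := lt_trans hvx hx1
    have key : x * (1 - x) < v * (1 - v) := by nlinarith
    have hlog : Real.log (x * (1 - x)) < Real.log (v * (1 - v)) :=
      Real.log_lt_log (mul_pos hx0 (by linarith)) key
    rw [Real.log_mul (ne_of_gt hx0) (by linarith), Real.log_mul (ne_of_gt hv0) (by linarith)] at hlog
    linarith
  have derivneg : ∀ x ∈ Set.Ioo t m, deriv H x < 0 := by
    intro x hx
    obtain ⟨hxt, hxm⟩ := hx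
    have hx1 : x < 1 := lt_trans hxm hm1
    have hD := hasDerivAt_H ht0 ht1 hxt hx1
    rw [hD.deriv]
    set v : ℝ := 1 + t - x with hv
    have hx0 : (0:ℝ) < x := lt_trans ht0 hxt
    have hxv : x < v := by rw [hv, hm] at *; linarith
    have hv1 : v < 1 := by rw [hv]; linarith
    have key : v * (1 - v) < x * (1 - x) := by nlinarith
    have hlog : Real.log (v * (1 - v)) < Real.log (x * (1 - x)) :=
      Real.log_lt_log (mul_pos (by linarith) (by linarith)) key
    rw [Real.log_mul (by linarith) (by linarith), Real.log_mul (ne_of_gt hx0) (by linarith)] at hlog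
    linarith
  have hcont1 : ContinuousOn H (Set.Ico m 1) := by
    intro x hx
    exact ((hasDerivAt_H ht0 ht1 (lt_of_lt_of_le hmt hx.1) hx.2).continuousAt).continuousWithinAt
  have hcont2 : ContinuousOn H (Set.Ioc t m) := by
    intro x hx
    exact ((hasDerivAt_H ht0 ht1 hx.1 (lt_of_le_of_lt hx.2 hm1)).continuousAt).continuousWithinAt
  have hmono : StrictMonoOn H (Set.Ico m 1) := by
    apply strictMonoOn_of_deriv_pos (convex_Ico m 1) hcont1
    rwa [interior_Ico]
  have hanti : StrictAntiOn H (Set.Ioc t m) := by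
    apply strictAntiOn_of_deriv_neg (convex_Ioc t m) hcont2
    rwa [interior_Ioc]
  have hHm : H m = 2 * Fy m := by
    have : 1 + t - m = m := by rw [hm]; ring
    simp only [hH, this]; ring
  rcases lt_trichotomy u m with h | h | h
  · have := hanti ⟨hu0, le_of_lt h⟩ ⟨hmt, le_refl m⟩ h
    rw [hHm] at this
    constructor
    · exact le_of_lt this
    · intro he; exfalso; rw [show Fy u + Fy (1+t-u) = H u from rfl] at he; linarith
  · constructor
    · rw [h, show Fy m + Fy (1+t-m) = H m from rfl, hHm]
    · intro _; exact h
  · have := hmono ⟨le_refl m, hm1⟩ ⟨le_of_lt h, hu1⟩ h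
    rw [hHm] at this
    constructor
    · exact le_of_lt this
    · intro he; exfalso; rw [show Fy u + Fy (1+t-u) = H u from rfl] at he; linarith

end Key


lemma one_div_conjExp {s : ℝ} (hs : 1 < s) : 1 / conjExp s = 1 - 1 / s := by
  unfold conjExp
  have h1 : s ≠ 0 := by linarith
  have h2 : s - 1 ≠ 0 := by intro h; linarith [h]
  field_simp

lemma conjExp_pos {s : ℝ} (hs : 1 < s) : 0 < conjExp s := by
  unfold conjExp
  apply div_pos <;> linarith

lemma youngc_eq {s : ℝ} (hs : 1 < s) : youngc s = Real.exp (Fy (1 / s)) := by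
  have hs0 : (0:ℝ) < s := by linarith
  have hc := conjExp_pos hs
  have h1 : 1 - 1 / s = (conjExp s)⁻¹ := by
    rw [← one_div_conjExp hs, one_div]
  rw [youngc, Real.rpow_def_of_pos hs0, Real.rpow_def_of_pos hc, ← Real.exp_sub]
  congr 1
  rw [Fy, h1, Real.log_inv, one_div s, Real.log_inv, ← one_div (conjExp s),
    one_div_conjExp hs, h1]
  ring

lemma rhs_eq {r : ℝ} (hr : 1 < r) :
    (2:ℝ) ^ (2 / r) * r * (r + 1) ^ (-(r + 1) / r) =
      Real.exp (2 * Fy ((r + 1) / (2 * r)) - Fy (1 / r)) := by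
  have hr0 : (0:ℝ) < r := by linarith
  have hr1 : (0:ℝ) < r + 1 := by linarith
  have hrm : (0:ℝ) < r - 1 := by linarith
  have hexp : 2 * Fy ((r + 1) / (2 * r)) - Fy (1 / r) =
      Real.log 2 * (2 / r) + Real.log r + Real.log (r + 1) * (-(r + 1) / r) := by
    have hm : 1 - (r + 1) / (2 * r) = (r - 1) / (2 * r) := by field_simp; ring
    have ht : 1 - 1 / r = (r - 1) / r := by field_simp
    rw [Fy, Fy, hm, ht]
    rw [Real.log_div (by linarith) (by positivity), Real.log_div (by linarith) (by positivity),
      Real.log_div (by linarith) (by linarith), Real.log_mul (by norm_num) (by linarith),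
      one_div, Real.log_inv]
    field_simp
    ring
  rw [hexp, Real.exp_add, Real.exp_add, Real.exp_log hr0,
    ← Real.rpow_def_of_pos (by norm_num : (0:ℝ) < 2), ← Real.rpow_def_of_pos hr1]

lemma youngC_exp {p q r : ℝ} (hp : 1 < p) (hq : 1 < q) (hr : 1 < r) :
    youngC p q r = Real.exp (Fy (1 / p) + Fy (1 / q) - Fy (1 / r)) := by
  rw [youngC, youngc_eq hp, youngc_eq hq, youngc_eq hr, ← Real.exp_add, ← Real.exp_sub]

/-- For fixed `r > 1`, among all `p, q > 1` with `1/p′ + 1/q′ = 1/r′`, the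
constant `C(p,q,r)` is minimized exactly at `p = q = 2r/(r+1)`, with minimal
value `2^(2/r) r (r+1)^(-(r+1)/r)`. -/
theorem youngC_minimized (r : ℝ) (hr : 1 < r) :
    (∀ p q : ℝ, 1 < p → 1 < q → 1 / conjExp p + 1 / conjExp q = 1 / conjExp r →
      youngC p q r ≥ 2 ^ (2 / r) * r * (r + 1) ^ (-(r + 1) / r)) ∧
    (1 / conjExp (2 * r / (r + 1)) + 1 / conjExp (2 * r / (r + 1)) = 1 / conjExp r) ∧
    (youngC (2 * r / (r + 1)) (2 * r / (r + 1)) r =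
      2 ^ (2 / r) * r * (r + 1) ^ (-(r + 1) / r)) ∧
    (∀ p q : ℝ, 1 < p → 1 < q → 1 / conjExp p + 1 / conjExp q = 1 / conjExp r →
      youngC p q r = 2 ^ (2 / r) * r * (r + 1) ^ (-(r + 1) / r) →
      p = 2 * r / (r + 1) ∧ q = 2 * r / (r + 1)) := by
  have hr0 : (0:ℝ) < r := by linarith
  have ht0 : (0:ℝ) < 1 / r := by positivity
  have ht1 : 1 / r < 1 := by rw [div_lt_one hr0]; linarith
  have hp0 : 1 < 2 * r / (r + 1) := by
    rw [lt_div_iff₀ (by linarith)]; linarith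
  have hip0 : 1 / (2 * r / (r + 1)) = (r + 1) / (2 * r) := one_div_div _ _
  have hmm : (1 + 1 / r) / 2 = (r + 1) / (2 * r) := by
    rw [div_eq_div_iff (by norm_num) (by positivity)]; field_simp
  -- generic setup for a constrained pair
  have setup : ∀ p q : ℝ, 1 < p → 1 < q →
      1 / conjExp p + 1 / conjExp q = 1 / conjExp r →
      (1 / r < 1 / p ∧ 1 / p < 1 ∧ 1 / q = 1 + 1 / r - 1 / p) := by
    intro p q hp hq hc
    rw [one_div_conjExp hp, one_div_conjExp hq, one_div_conjExp hr] at hc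
    have hp1 : 1 / p < 1 := by rw [div_lt_one (by linarith)]; linarith
    have hq1 : 1 / q < 1 := by rw [div_lt_one (by linarith)]; linarith
    exact ⟨by linarith, hp1, by linarith⟩
  refine ⟨?_, ?_, ?_, ?_⟩
  · intro p q hp hq hc
    obtain ⟨h1, h2, h3⟩ := setup p q hp hq hc
    have hk := (key ht0 ht1 h1 h2).1
    rw [youngC_exp hp hq hr, ge_iff_le, rhs_eq hr, Real.exp_le_exp, ← hmm, h3]
    linarith
  · rw [one_div_conjExp hp0, one_div_conjExp hr, hip0]
    field_simp
    ring
  · rw [youngC_exp hp0 hp0 hr, rhs_eq hr, hip0]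
    ring_nf
  · intro p q hp hq hc he
    obtain ⟨h1, h2, h3⟩ := setup p q hp hq hc
    rw [youngC_exp hp hq hr, rhs_eq hr, Real.exp_eq_exp, ← hmm] at he
    have heq : Fy (1 / p) + Fy (1 + 1 / r - 1 / p) = 2 * Fy ((1 + 1 / r) / 2) := by
      rw [← h3]; linarith
    have hup := (key ht0 ht1 h1 h2).2 heq
    have hpv : p = 2 * r / (r + 1) := by
      rw [hmm] at hup
      rw [eq_div_iff (by linarith : r + 1 ≠ 0)]
      have hp0' : p ≠ 0 := by linarith
      field_simp at hup
      linarith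
    refine ⟨hpv, ?_⟩
    have huq : 1 / q = (r + 1) / (2 * r) := by
      rw [h3, hup, hmm]; linarith [hmm]
    rw [eq_div_iff (by linarith : r + 1 ≠ 0)]
    have hq0' : q ≠ 0 := by linarith
    field_simp at huq
    linarith
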